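/- Exponential supremum inequality (Donsker–Varadhan plus Bernstein step): Let μ be any probability distribution on 𝒜 and let ε ∈ (0,1] satisfy π_n(a) ≥ ε almost surely for all a ∈ 𝒜 and all n ∈ {1,…,t}. For each a ∈ 𝒜 let Z_n^IS(a) = (1{A_n = a}/π_n(A_n)) R_n − r̄(a) and V_t^IS(a) = Σ_{n=1}^t E[(Z_n^IS(a))² | ℱ_{n−1}]. Then for every l ∈ [0, ε]: E[ exp( sup_{π} { E_{A∼π}[ l · t · (r̂^IS(A, H^t) − r̄(A)) − l²(e − 2) V_t^IS(A) ] − KL(π‖μ) } ) ] ≤ 1, where the supremum is over all probability distributions π on 𝒜 and e is Euler's number. -/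

import Mathlib

open MeasureTheory Real

set_option linter.unusedSectionVars false
set_option maxHeartbeats 1000000

section Bernstein
open Nat

lemma exp_tsum (x : ℝ) : Real.exp x = ∑' n : ℕ, x ^ n / n ! := by
  rw [Real.exp_eq_exp_ℝ, NormedSpace.exp_eq_tsum_div]

lemma bernstein_exp_le {x : ℝ} (hx1 : -1 ≤ x) (hx2 : x ≤ 1) :
    Real.exp x ≤ 1 + x + (Real.exp 1 - 2) * x ^ 2 := by
  rcases le_or_gt 0 x with hx0 | hx0
  · have hsum : Summable fun n : ℕ => x ^ n / n ! := Real.summable_pow_div_factorial x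
    have hsum1 : Summable fun n : ℕ => (1:ℝ) ^ n / n ! := Real.summable_pow_div_factorial 1
    have hsx : Summable fun n : ℕ => x ^ (n+2) / (n+2)! :=
      (summable_nat_add_iff (f := fun n : ℕ => x ^ n / n !) 2).2 hsum
    have hs1 : Summable fun n : ℕ => (1:ℝ) ^ (n+2) / (n+2)! :=
      (summable_nat_add_iff (f := fun n : ℕ => (1:ℝ) ^ n / n !) 2).2 hsum1
    have hexp : Real.exp x = 1 + x + ∑' n : ℕ, x ^ (n+2) / (n+2)! := by
      rw [exp_tsum, ← Summable.sum_add_tsum_nat_add 2 hsum]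
      simp [Finset.sum_range_succ]
    have hexp1 : Real.exp 1 - 2 = ∑' n : ℕ, (1:ℝ) ^ (n+2) / (n+2)! := by
      have h := Summable.sum_add_tsum_nat_add 2 hsum1
      rw [← exp_tsum 1] at h
      have h2 : ∑ i ∈ Finset.range 2, (1:ℝ) ^ i / i ! = 2 := by
        norm_num [Finset.sum_range_succ]
      linarith [h, h2]
    have hle : ∑' n : ℕ, x ^ (n+2) / (n+2)! ≤ ∑' n : ℕ, x ^ 2 * ((1:ℝ) ^ (n+2) / (n+2)!) := by
      refine Summable.tsum_le_tsum (fun n => ?_) hsx (hs1.mul_left _)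
      have hfac : (0:ℝ) < (n+2)! := by positivity
      rw [div_le_iff₀ hfac]
      have hxe : x ^ (n+2) = x ^ 2 * x ^ n := by ring
      rw [hxe]
      have hxn : x ^ n ≤ 1 := pow_le_one₀ hx0 hx2
      have hx2' : (0:ℝ) ≤ x ^ 2 := sq_nonneg x
      calc x ^ 2 * x ^ n ≤ x ^ 2 * 1 := by nlinarith
        _ = x ^ 2 * (1 ^ (n+2) / (n+2)!) * (n+2)! := by field_simp; simp
    have hmul : ∑' n : ℕ, x ^ 2 * ((1:ℝ) ^ (n+2) / (n+2)!)
        = x ^ 2 * ∑' n : ℕ, (1:ℝ) ^ (n+2) / (n+2)! := tsum_mul_left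
    rw [hexp, hexp1]
    nlinarith [hle, hmul]
  · have habs : |x| ≤ 1 := abs_le.2 ⟨hx1, hx2⟩
    have hb := Real.exp_bound habs (by norm_num : 0 < 4)
    have hsum4 : ∑ i ∈ Finset.range 4, x ^ i / i ! = 1 + x + x^2/2 + x^3/6 := by
      norm_num [Finset.sum_range_succ, Nat.factorial]
    rw [hsum4] at hb
    have habs4 : |x| ^ 4 = x ^ 4 := by
      rw [← abs_pow, abs_of_nonneg (by positivity)]
    rw [habs4] at hb
    norm_num [Nat.factorial] at hb
    have hx3 : x ^ 3 ≤ 0 := by nlinarith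
    have hx4 : x ^ 4 ≤ x ^ 2 := by nlinarith [sq_nonneg (x^2 - x), sq_nonneg (x^2 + x)]
    have he : (2.7182818283 : ℝ) < Real.exp 1 := Real.exp_one_gt_d9
    have hb' := abs_le.1 hb
    nlinarith [sq_nonneg x]
end Bernstein


namespace OfflineBandits

/-- The σ-algebra generated by the history `H^n = (A_1, R_1, …, A_n, R_n)`
(trivial for `n = 0`). -/
def hist {Ω 𝒜 : Type*} [MeasurableSpace 𝒜] (A : ℕ → Ω → 𝒜) (R : ℕ → Ω → ℝ)
    (n : ℕ) : MeasurableSpace Ω :=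
  MeasurableSpace.comap (fun ω => fun i : Fin n => (A (i.1 + 1) ω, R (i.1 + 1) ω)) inferInstance

/-- `p` is a probability mass function on the finite action set `𝒜`. -/
def IsPMF {𝒜 : Type*} [Fintype 𝒜] (p : 𝒜 → ℝ) : Prop :=
  (∀ a, 0 ≤ p a) ∧ ∑ a, p a = 1

/-- Relative entropy (KL divergence) between two pmfs on a finite set. -/
noncomputable def KL {𝒜 : Type*} [Fintype 𝒜] (p q : 𝒜 → ℝ) : ℝ :=
  ∑ a, p a * Real.log (p a / q a)

/-- Importance-sampling estimate `r̂^IS(a, H^t)` of the expected reward of action `a`. -/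
noncomputable def rIS {Ω 𝒜 : Type*} [DecidableEq 𝒜] (A : ℕ → Ω → 𝒜) (R : ℕ → Ω → ℝ)
    (pol : ℕ → Ω → 𝒜 → ℝ) (t : ℕ) (a : 𝒜) (ω : Ω) : ℝ :=
  (t : ℝ)⁻¹ * ∑ n ∈ Finset.Icc 1 t, (if A n ω = a then 1 else 0) / pol n ω (A n ω) * R n ω

/-- Importance-sampling estimate `r̂^IS(π, H^t)` of the expected reward of a policy. -/
noncomputable def rISPol {Ω 𝒜 : Type*} [Fintype 𝒜] [DecidableEq 𝒜] (A : ℕ → Ω → 𝒜) (R : ℕ → Ω → ℝ)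
    (pol : ℕ → Ω → 𝒜 → ℝ) (t : ℕ) (p : 𝒜 → ℝ) (ω : Ω) : ℝ :=
  ∑ a, p a * rIS A R pol t a ω

/-- Expected reward `r̄(π)` of a policy `π`. -/
def rPol {𝒜 : Type*} [Fintype 𝒜] (rbar : 𝒜 → ℝ) (p : 𝒜 → ℝ) : ℝ :=
  ∑ a, p a * rbar a

/-- The martingale difference `Z_n^IS(a)`. -/
noncomputable def Zis {Ω 𝒜 : Type*} [DecidableEq 𝒜] (A : ℕ → Ω → 𝒜) (R : ℕ → Ω → ℝ)
    (pol : ℕ → Ω → 𝒜 → ℝ) (rbar : 𝒜 → ℝ) (a : 𝒜) (n : ℕ) (ω : Ω) : ℝ :=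
  (if A n ω = a then 1 else 0) / pol n ω (A n ω) * R n ω - rbar a

/-- The cumulative conditional variance `V_t^IS(a)` of the IS martingale. -/
noncomputable def Vis {Ω 𝒜 : Type*} [MeasurableSpace Ω] [MeasurableSpace 𝒜] [DecidableEq 𝒜]
    (P : Measure Ω) (A : ℕ → Ω → 𝒜) (R : ℕ → Ω → ℝ)
    (pol : ℕ → Ω → 𝒜 → ℝ) (rbar : 𝒜 → ℝ) (t : ℕ) (a : 𝒜) (ω : Ω) : ℝ :=
  ∑ n ∈ Finset.Icc 1 t, (P[fun ω' => (Zis A R pol rbar a n ω') ^ 2 | hist A R (n - 1)]) ω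

section DV

variable {𝒜 : Type*} [Fintype 𝒜]

lemma sum_exp_pos (μ : 𝒜 → ℝ) (hμ : IsPMF μ) (f : 𝒜 → ℝ) :
    0 < ∑ a, μ a * Real.exp (f a) := by
  obtain ⟨a₀, ha₀⟩ : ∃ a, 0 < μ a := by
    by_contra h
    push_neg at h
    have : ∑ a, μ a = 0 := Finset.sum_eq_zero fun a _ => le_antisymm (h a) (hμ.1 a)
    rw [hμ.2] at this; norm_num at this
  refine Finset.sum_pos' (fun a _ => mul_nonneg (hμ.1 a) (Real.exp_pos _).le) ⟨a₀, Finset.mem_univ _, mul_pos ha₀ (Real.exp_pos _)⟩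

lemma dv_upper (μ : 𝒜 → ℝ) (hμ : IsPMF μ) (f : 𝒜 → ℝ)
    (p : 𝒜 → ℝ) (hp : IsPMF p) (hac : ∀ a, μ a = 0 → p a = 0) :
    ∑ a, p a * f a - KL p μ ≤ Real.log (∑ a, μ a * Real.exp (f a)) := by
  classical
  set S := ∑ a, μ a * Real.exp (f a) with hS
  have hS0 : 0 < S := sum_exp_pos μ hμ f
  set s : Finset 𝒜 := Finset.univ.filter (fun a => p a ≠ 0) with hs
  have hsum_s : ∑ a ∈ s, p a = 1 := by
    rw [hs, Finset.sum_filter_ne_zero, hp.2]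
  have hps : ∀ a ∈ s, 0 < p a := fun a ha =>
    lt_of_le_of_ne (hp.1 a) (Ne.symm (Finset.mem_filter.1 ha).2)
  have hμs : ∀ a ∈ s, 0 < μ a := fun a ha =>
    lt_of_le_of_ne (hμ.1 a) fun h => (Finset.mem_filter.1 ha).2 (hac a h.symm)
  have hlhs : ∑ a, p a * f a - KL p μ
      = ∑ a ∈ s, p a * Real.log (μ a * Real.exp (f a) / p a) := by
    rw [KL, ← Finset.sum_sub_distrib]
    rw [← Finset.sum_filter_ne_zero (s := Finset.univ)
      (f := fun a => p a * f a - p a * Real.log (p a / μ a))]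
    have hfil : Finset.univ.filter
        (fun a => p a * f a - p a * Real.log (p a / μ a) ≠ 0) ⊆ s := by
      intro a ha
      rw [hs, Finset.mem_filter]
      refine ⟨Finset.mem_univ _, fun h0 => ?_⟩
      have := (Finset.mem_filter.1 ha).2
      simp [h0] at this
    rw [Finset.sum_subset hfil]
    · refine Finset.sum_congr rfl fun a ha => ?_
      have hpa := hps a ha
      have hμa := hμs a ha
      rw [Real.log_div (by positivity) hpa.ne', Real.log_mul hμa.ne' (Real.exp_pos _).ne',
        Real.log_exp, Real.log_div hpa.ne' hμa.ne']
      ring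
    · intro a ha hna
      by_contra h
      exact hna (by simpa using h)
  rw [hlhs]
  have hjen := (strictConcaveOn_log_Ioi.concaveOn).le_map_sum
    (t := s) (w := p) (p := fun a => μ a * Real.exp (f a) / p a)
    (fun a ha => (hps a ha).le) hsum_s
    (fun a ha => Set.mem_Ioi.2 (by have := hμs a ha; have := hps a ha; positivity))
  simp only [smul_eq_mul] at hjen
  refine le_trans hjen ?_
  have hsum_eq : ∑ a ∈ s, p a * (μ a * Real.exp (f a) / p a)
      = ∑ a ∈ s, μ a * Real.exp (f a) := by
    refine Finset.sum_congr rfl fun a ha => ?_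
    rw [mul_comm]
    exact div_mul_cancel₀ _ (hps a ha).ne'
  rw [hsum_eq]
  refine Real.log_le_log ?_ ?_
  · obtain ⟨a, ha⟩ : s.Nonempty := by
      by_contra h
      rw [Finset.not_nonempty_iff_eq_empty] at h
      rw [h] at hsum_s
      simp at hsum_s
    exact Finset.sum_pos' (fun a ha => by have := hμs a ha; positivity)
      ⟨a, ha, by have := hμs a ha; positivity⟩
  · exact Finset.sum_le_sum_of_subset_of_nonneg (Finset.subset_univ s)
      (fun a _ _ => by have := hμ.1 a; positivity)

lemma dv_gibbs (μ : 𝒜 → ℝ) (hμ : IsPMF μ) (f : 𝒜 → ℝ) :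
    ∃ h : IsPMF (fun a => μ a * Real.exp (f a) / ∑ b, μ b * Real.exp (f b)) ∧
        (∀ a, μ a = 0 → μ a * Real.exp (f a) / ∑ b, μ b * Real.exp (f b) = 0),
      ∑ a, (μ a * Real.exp (f a) / ∑ b, μ b * Real.exp (f b)) * f a
        - KL (fun a => μ a * Real.exp (f a) / ∑ b, μ b * Real.exp (f b)) μ
        = Real.log (∑ a, μ a * Real.exp (f a)) := by
  set S := ∑ b, μ b * Real.exp (f b) with hS
  have hS0 : 0 < S := sum_exp_pos μ hμ f
  set q : 𝒜 → ℝ := fun a => μ a * Real.exp (f a) / S with hq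
  have hqpmf : IsPMF q := by
    constructor
    · intro a; have := hμ.1 a; positivity
    · rw [hq]
      simp only
      rw [← Finset.sum_div, ← hS, div_self hS0.ne']
  have hqac : ∀ a, μ a = 0 → q a = 0 := by
    intro a h; simp [hq, h]
  refine ⟨⟨hqpmf, hqac⟩, ?_⟩
  have hterm : ∀ a, q a * f a - q a * Real.log (q a / μ a) = q a * Real.log S := by
    intro a
    rcases eq_or_lt_of_le (hμ.1 a) with h0 | hpos
    · have : q a = 0 := hqac a h0.symm
      simp [this]
    · have hqa : 0 < q a := by rw [hq]; positivity
      have hdiv : q a / μ a = Real.exp (f a) / S := by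
        rw [hq]; field_simp
      rw [hdiv, Real.log_div (Real.exp_pos _).ne' hS0.ne', Real.log_exp]
      ring
  rw [KL, ← Finset.sum_sub_distrib]
  calc ∑ a, (q a * f a - q a * Real.log (q a / μ a)) = ∑ a, q a * Real.log S :=
        Finset.sum_congr rfl fun a _ => hterm a
    _ = (∑ a, q a) * Real.log S := by rw [Finset.sum_mul]
    _ = Real.log S := by rw [hqpmf.2, one_mul]

lemma dv_sup_eq (μ : 𝒜 → ℝ) (hμ : IsPMF μ) (f : 𝒜 → ℝ) :
    (⨆ p : {p : 𝒜 → ℝ // IsPMF p ∧ ∀ a, μ a = 0 → p a = 0},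
      (∑ a, p.1 a * f a - KL p.1 μ)) = Real.log (∑ a, μ a * Real.exp (f a)) := by
  haveI : Nonempty {p : 𝒜 → ℝ // IsPMF p ∧ ∀ a, μ a = 0 → p a = 0} :=
    ⟨⟨μ, hμ, fun a h => h⟩⟩
  obtain ⟨⟨hqpmf, hqac⟩, hqval⟩ := dv_gibbs μ hμ f
  have hub : ∀ p : {p : 𝒜 → ℝ // IsPMF p ∧ ∀ a, μ a = 0 → p a = 0},
      ∑ a, p.1 a * f a - KL p.1 μ ≤ Real.log (∑ a, μ a * Real.exp (f a)) :=
    fun p => dv_upper μ hμ f p.1 p.2.1 p.2.2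
  refine le_antisymm (ciSup_le hub) ?_
  have hbdd : BddAbove (Set.range fun p : {p : 𝒜 → ℝ // IsPMF p ∧ ∀ a, μ a = 0 → p a = 0} =>
      ∑ a, p.1 a * f a - KL p.1 μ) := ⟨_, by rintro _ ⟨p, rfl⟩; exact hub p⟩
  exact le_ciSup_of_le hbdd ⟨_, hqpmf, hqac⟩ hqval.ge

end DV

section Meas

variable {Ω 𝒜 : Type*} [MeasurableSpace Ω] [Fintype 𝒜] [DecidableEq 𝒜]
  [MeasurableSpace 𝒜] [MeasurableSingletonClass 𝒜]
  (A : ℕ → Ω → 𝒜) (R : ℕ → Ω → ℝ)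


lemma hist_le (hA : ∀ n, Measurable (A n)) (hR : ∀ n, Measurable (R n)) (n : ℕ) :
    hist A R n ≤ ‹MeasurableSpace Ω› := by
  rw [hist]
  exact measurable_iff_comap_le.mp
    (measurable_pi_lambda _ fun i => ((hA _).prodMk (hR _)))

lemma hist_mono {m n : ℕ} (h : m ≤ n) : hist A R m ≤ hist A R n := by
  rw [hist, hist]
  have hcomp : (fun ω => fun i : Fin m => (A (i.1 + 1) ω, R (i.1 + 1) ω))
      = (fun v : Fin n → 𝒜 × ℝ => fun i : Fin m => v (Fin.castLE h i))
        ∘ (fun ω => fun i : Fin n => (A (i.1 + 1) ω, R (i.1 + 1) ω)) := rfl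
  rw [hcomp, ← MeasurableSpace.comap_comp]
  exact MeasurableSpace.comap_mono (measurable_iff_comap_le.mp
    (measurable_pi_lambda _ fun i => measurable_pi_apply _))

lemma measurable_hist_A {k n : ℕ} (h1 : 1 ≤ n) (h2 : n ≤ k) :
    Measurable[hist A R k] (A n) := by
  have hg : Measurable[hist A R k]
      (fun ω => fun i : Fin k => (A (i.1 + 1) ω, R (i.1 + 1) ω)) :=
    measurable_iff_comap_le.mpr le_rfl
  have hidx : n - 1 < k := by omega
  have : A n = fun ω =>
      ((fun i : Fin k => (A (i.1 + 1) ω, R (i.1 + 1) ω)) ⟨n - 1, hidx⟩).1 := by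
    funext ω
    simp [Nat.sub_add_cancel h1]
  rw [this]
  exact measurable_fst.comp ((measurable_pi_apply _).comp hg)

lemma measurable_hist_R {k n : ℕ} (h1 : 1 ≤ n) (h2 : n ≤ k) :
    Measurable[hist A R k] (R n) := by
  have hg : Measurable[hist A R k]
      (fun ω => fun i : Fin k => (A (i.1 + 1) ω, R (i.1 + 1) ω)) :=
    measurable_iff_comap_le.mpr le_rfl
  have hidx : n - 1 < k := by omega
  have : R n = fun ω =>
      ((fun i : Fin k => (A (i.1 + 1) ω, R (i.1 + 1) ω)) ⟨n - 1, hidx⟩).2 := by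
    funext ω
    simp [Nat.sub_add_cancel h1]
  rw [this]
  exact measurable_snd.comp ((measurable_pi_apply _).comp hg)

lemma measurable_polA (pol : ℕ → Ω → 𝒜 → ℝ)
    (hpolMeas : ∀ n a, Measurable[hist A R (n - 1)] (fun ω => pol n ω a))
    {k n : ℕ} (h1 : 1 ≤ n) (h2 : n ≤ k) :
    Measurable[hist A R k] (fun ω => pol n ω (A n ω)) := by
  have heq : (fun ω => pol n ω (A n ω))
      = fun ω => ∑ a, if A n ω = a then pol n ω a else 0 := by
    funext ω
    symm
    rw [Finset.sum_eq_single (A n ω)]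
    · simp
    · intro b _ hb
      exact if_neg fun h => hb h.symm
    · intro h
      exact absurd (Finset.mem_univ _) h
  rw [heq]
  refine Finset.measurable_sum _ fun a _ => Measurable.ite ?_ ?_ measurable_const
  · exact (measurable_hist_A A R h1 h2) (measurableSet_singleton a)
  · exact (hpolMeas n a).mono (hist_mono A R (by omega)) le_rfl

lemma measurable_Zis (pol : ℕ → Ω → 𝒜 → ℝ)
    (hpolMeas : ∀ n a, Measurable[hist A R (n - 1)] (fun ω => pol n ω a))
    (rbar : 𝒜 → ℝ) (a : 𝒜) {k n : ℕ} (h1 : 1 ≤ n) (h2 : n ≤ k) :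
    Measurable[hist A R k] (Zis A R pol rbar a n) := by
  unfold Zis
  have hind : Measurable[hist A R k] (fun ω => if A n ω = a then (1:ℝ) else 0) :=
    Measurable.ite ((measurable_hist_A A R h1 h2) (measurableSet_singleton a))
      measurable_const measurable_const
  exact ((hind.div (measurable_polA A R pol hpolMeas h1 h2)).mul
    (measurable_hist_R A R h1 h2)).sub measurable_const

end Meas

section Core

variable {Ω 𝒜 : Type*} [MeasurableSpace Ω] [Fintype 𝒜] [DecidableEq 𝒜]
  [MeasurableSpace 𝒜] [MeasurableSingletonClass 𝒜]
  (P : Measure Ω) [IsProbabilityMeasure P]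
  (A : ℕ → Ω → 𝒜) (R : ℕ → Ω → ℝ)
  (pol : ℕ → Ω → 𝒜 → ℝ) (rbar : 𝒜 → ℝ)

-- bounds on Zis, pointwise
lemma Zis_bounds {ε : ℝ} (hε0 : 0 < ε) (hε1 : ε ≤ 1) {a : 𝒜} {n : ℕ} {ω : Ω}
    (hq : ε ≤ pol n ω (A n ω)) (hR0 : 0 ≤ R n ω) (hR1 : R n ω ≤ 1)
    (hrb0 : 0 ≤ rbar a) (hrb1 : rbar a ≤ 1) :
    -1 ≤ Zis A R pol rbar a n ω ∧ Zis A R pol rbar a n ω ≤ ε⁻¹ := by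
  have hqpos : 0 < pol n ω (A n ω) := lt_of_lt_of_le hε0 hq
  have hterm : 0 ≤ (if A n ω = a then (1:ℝ) else 0) / pol n ω (A n ω) * R n ω ∧
      (if A n ω = a then (1:ℝ) else 0) / pol n ω (A n ω) * R n ω ≤ ε⁻¹ := by
    by_cases h : A n ω = a
    · rw [if_pos h]
      constructor
      · positivity
      · calc 1 / pol n ω (A n ω) * R n ω ≤ 1 / pol n ω (A n ω) * 1 := by
              apply mul_le_mul_of_nonneg_left hR1; positivity
          _ = (pol n ω (A n ω))⁻¹ := by rw [mul_one, one_div]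
          _ ≤ ε⁻¹ := by exact inv_anti₀ hε0 hq
    · simp only [if_neg h]
      rw [zero_div, zero_mul]
      exact ⟨le_refl 0, by positivity⟩
  unfold Zis
  constructor
  · linarith [hterm.1]
  · linarith [hterm.2]


-- integrability from an a.e. bound
lemma integrable_of_ae_bound {f : Ω → ℝ} (hf : AEStronglyMeasurable f P)
    {C : ℝ} (h : ∀ᵐ ω ∂P, ‖f ω‖ ≤ C) : Integrable f P :=
  Integrable.mono' (integrable_const C) hf h

lemma condExp_Zis_zero
    (hA : ∀ n, Measurable (A n)) (hR : ∀ n, Measurable (R n))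
    (hR01 : ∀ n ω, R n ω ∈ Set.Icc (0 : ℝ) 1)
    (hpolMeas : ∀ n a, Measurable[hist A R (n - 1)] (fun ω => pol n ω a))
    {ε : ℝ} (hε0 : 0 < ε)
    {n : ℕ} {a : 𝒜}
    (hpolCondn : (P[(fun ω => if A n ω = a then (1 : ℝ) else 0) | hist A R (n - 1)])
        =ᵐ[P] fun ω => pol n ω a)
    (hrewn : (P[R n | hist A R (n - 1) ⊔ MeasurableSpace.comap (A n) inferInstance])
        =ᵐ[P] fun ω => rbar (A n ω))
    (hεn : ∀ᵐ ω ∂P, ε ≤ pol n ω a) :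
    P[Zis A R pol rbar a n | hist A R (n - 1)] =ᵐ[P] 0 := by
  have hm : hist A R (n - 1) ≤ ‹MeasurableSpace Ω› := hist_le A R hA hR (n - 1)
  have hm2 : hist A R (n - 1) ⊔ MeasurableSpace.comap (A n) inferInstance
      ≤ ‹MeasurableSpace Ω› :=
    sup_le hm (measurable_iff_comap_le.mp (hA n))
  set ind : Ω → ℝ := fun ω => if A n ω = a then (1 : ℝ) else 0 with hind_def
  set Y : Ω → ℝ := fun ω => ind ω * R n ω with hY_def
  have hind_meas : Measurable ind :=
    Measurable.ite ((hA n) (measurableSet_singleton a)) measurable_const measurable_const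
  have hind_m2 : StronglyMeasurable[hist A R (n - 1)
      ⊔ MeasurableSpace.comap (A n) inferInstance] ind := by
    refine Measurable.stronglyMeasurable ?_
    have h0 : Measurable[MeasurableSpace.comap (A n) inferInstance] (A n) :=
      measurable_iff_comap_le.mpr le_rfl
    exact Measurable.mono
      (Measurable.ite (h0 (measurableSet_singleton a)) measurable_const measurable_const)
      le_sup_right le_rfl
  have hind_bd : ∀ ω, ind ω ∈ Set.Icc (0:ℝ) 1 := by
    intro ω; by_cases h : A n ω = a <;> simp [hind_def, h]
  have hY_bd : ∀ ω, Y ω ∈ Set.Icc (0:ℝ) 1 := by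
    intro ω
    have h1 := hind_bd ω
    have h2 := hR01 n ω
    constructor
    · exact mul_nonneg h1.1 h2.1
    · calc ind ω * R n ω ≤ 1 * 1 := mul_le_mul h1.2 h2.2 h2.1 zero_le_one
        _ = 1 := one_mul 1
  have hY_int : Integrable Y P := by
    refine integrable_of_ae_bound P ((hind_meas.mul (hR n)).aestronglyMeasurable) (C := 1) ?_
    filter_upwards with ω
    rw [Real.norm_eq_abs, abs_le]
    exact ⟨by linarith [(hY_bd ω).1], (hY_bd ω).2⟩
  have hR_int : Integrable (R n) P := by
    refine integrable_of_ae_bound P ((hR n).aestronglyMeasurable) (C := 1) ?_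
    filter_upwards with ω
    rw [Real.norm_eq_abs, abs_le]
    exact ⟨by linarith [(hR01 n ω).1], (hR01 n ω).2⟩
  -- Step 1 : conditional expectation of Y given the larger σ-algebra
  have hstep1 : P[Y | hist A R (n - 1) ⊔ MeasurableSpace.comap (A n) inferInstance]
      =ᵐ[P] fun ω => ind ω * rbar a := by
    have hpull : P[Y | hist A R (n - 1) ⊔ MeasurableSpace.comap (A n) inferInstance]
        =ᵐ[P] ind * P[R n | hist A R (n - 1) ⊔ MeasurableSpace.comap (A n) inferInstance] :=
      condExp_mul_of_stronglyMeasurable_left hind_m2 hY_int hR_int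
    refine hpull.trans ?_
    have h2 := Filter.EventuallyEq.mul
      (Filter.EventuallyEq.refl (MeasureTheory.ae P) ind) hrewn
    refine h2.trans (Filter.Eventually.of_forall fun ω => ?_)
    simp only [Pi.mul_apply]
    by_cases h : A n ω = a
    · simp [hind_def, h]
    · simp [hind_def, h]
  -- Step 2 : conditional expectation of Y given the history
  have hstep2 : P[Y | hist A R (n - 1)] =ᵐ[P] fun ω => rbar a * pol n ω a := by
    have htower : P[Y | hist A R (n - 1)] =ᵐ[P]
        P[P[Y | hist A R (n - 1) ⊔ MeasurableSpace.comap (A n) inferInstance]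
          | hist A R (n - 1)] :=
      (condExp_condExp_of_le le_sup_left hm2).symm
    refine htower.trans ?_
    refine (condExp_congr_ae hstep1).trans ?_
    have hsmul : (fun ω => ind ω * rbar a) = rbar a • ind := by
      funext ω; simp [smul_eq_mul, mul_comm]
    rw [hsmul]
    refine (condExp_smul (rbar a) ind _).trans ?_
    filter_upwards [hpolCondn] with ω hω
    simp only [Pi.smul_apply, smul_eq_mul]
    rw [hω]
  -- Step 3 : conclude
  have hzrep : Zis A R pol rbar a n
      = fun ω => (fun ω' => (pol n ω' a)⁻¹ * Y ω') ω - (fun _ => rbar a) ω := by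
    funext ω
    simp only [Zis, hY_def, hind_def]
    by_cases h : A n ω = a
    · rw [if_pos h, h, one_div, one_mul]
    · simp [h]
  have hpolinv_m : StronglyMeasurable[hist A R (n - 1)] (fun ω => (pol n ω a)⁻¹) :=
    Measurable.stronglyMeasurable (Measurable.inv (hpolMeas n a))
  have hPY_int : Integrable (fun ω => (pol n ω a)⁻¹ * Y ω) P := by
    refine integrable_of_ae_bound P ?_ (C := ε⁻¹) ?_
    · exact ((((hpolMeas n a).mono hm le_rfl).inv).mul
        (hind_meas.mul (hR n))).aestronglyMeasurable
    · filter_upwards [hεn] with ω hω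
      have hppos : 0 < pol n ω a := lt_of_lt_of_le hε0 hω
      rw [Real.norm_eq_abs, abs_mul, abs_of_nonneg (by positivity : (0:ℝ) ≤ (pol n ω a)⁻¹),
        abs_of_nonneg (hY_bd ω).1]
      calc (pol n ω a)⁻¹ * Y ω ≤ (pol n ω a)⁻¹ * 1 :=
            mul_le_mul_of_nonneg_left (hY_bd ω).2 (by positivity)
        _ = (pol n ω a)⁻¹ := mul_one _
        _ ≤ ε⁻¹ := inv_anti₀ hε0 hω
  have hpull2 : P[fun ω => (pol n ω a)⁻¹ * Y ω | hist A R (n - 1)]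
      =ᵐ[P] (fun ω => (pol n ω a)⁻¹) * P[Y | hist A R (n - 1)] :=
    condExp_mul_of_stronglyMeasurable_left hpolinv_m hPY_int hY_int
  have hmain : P[fun ω => (pol n ω a)⁻¹ * Y ω | hist A R (n - 1)]
      =ᵐ[P] fun _ => rbar a := by
    refine hpull2.trans ?_
    filter_upwards [hstep2, hεn] with ω h1 h2
    simp only [Pi.mul_apply]
    rw [h1]
    have hppos : 0 < pol n ω a := lt_of_lt_of_le hε0 h2
    field_simp
  rw [hzrep]
  refine (condExp_sub hPY_int (integrable_const _) _).trans ?_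
  have hc : P[(fun _ : Ω => rbar a) | hist A R (n - 1)] = fun _ => rbar a :=
    condExp_const hm _
  filter_upwards [hmain] with ω h1
  simp only [Pi.sub_apply, h1, hc, Pi.zero_apply]
  ring


lemma condExp_exp_le
    (hA : ∀ n, Measurable (A n)) (hR : ∀ n, Measurable (R n))
    {ε : ℝ} (hε0 : 0 < ε) (hε1 : ε ≤ 1)
    {n : ℕ} {a : 𝒜}
    (hZmeas : Measurable (Zis A R pol rbar a n))
    (hZbd : ∀ᵐ ω ∂P, -1 ≤ Zis A R pol rbar a n ω ∧ Zis A R pol rbar a n ω ≤ ε⁻¹)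
    (hZmean : P[Zis A R pol rbar a n | hist A R (n - 1)] =ᵐ[P] 0)
    {l : ℝ} (hl0 : 0 ≤ l) (hlε : l ≤ ε) :
    P[fun ω => Real.exp (l * Zis A R pol rbar a n ω) | hist A R (n - 1)]
      ≤ᵐ[P] fun ω => Real.exp (l ^ 2 * (Real.exp 1 - 2)
        * (P[fun ω' => Zis A R pol rbar a n ω' ^ 2 | hist A R (n - 1)]) ω) := by
  have hm : hist A R (n - 1) ≤ ‹MeasurableSpace Ω› := hist_le A R hA hR (n - 1)
  set Z : Ω → ℝ := Zis A R pol rbar a n with hZ_def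
  have hx : ∀ᵐ ω ∂P, -1 ≤ l * Z ω ∧ l * Z ω ≤ 1 := by
    filter_upwards [hZbd] with ω hω
    constructor
    · nlinarith [hω.1, hω.2]
    · have h1 : l * Z ω ≤ l * ε⁻¹ := mul_le_mul_of_nonneg_left hω.2 hl0
      have h2 : l * ε⁻¹ ≤ ε * ε⁻¹ := by
        apply mul_le_mul_of_nonneg_right hlε
        positivity
      rw [mul_inv_cancel₀ hε0.ne'] at h2
      linarith
  have hZint : Integrable Z P := by
    refine integrable_of_ae_bound P hZmeas.aestronglyMeasurable (C := ε⁻¹) ?_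
    filter_upwards [hZbd] with ω hω
    rw [Real.norm_eq_abs, abs_le]
    refine ⟨?_, hω.2⟩
    have : (1:ℝ) ≤ ε⁻¹ := by
      rw [le_inv_comm₀ zero_lt_one hε0]
      simpa using hε1
    linarith [hω.1]
  have hZ2int : Integrable (fun ω => Z ω ^ 2) P := by
    refine integrable_of_ae_bound P (hZmeas.pow_const 2).aestronglyMeasurable
      (C := ε⁻¹ ^ 2) ?_
    filter_upwards [hZbd] with ω hω
    rw [Real.norm_eq_abs, abs_le]
    have h1 : (1:ℝ) ≤ ε⁻¹ := by
      rw [le_inv_comm₀ zero_lt_one hε0]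
      simpa using hε1
    constructor
    · nlinarith [sq_nonneg (Z ω)]
    · nlinarith [hω.1, hω.2]
  have hexp_int : Integrable (fun ω => Real.exp (l * Z ω)) P := by
    refine integrable_of_ae_bound P
      (Real.measurable_exp.comp (hZmeas.const_mul l)).aestronglyMeasurable
      (C := Real.exp 1) ?_
    filter_upwards [hx] with ω hω
    rw [Real.norm_eq_abs, abs_of_pos (Real.exp_pos _)]
    exact Real.exp_le_exp.2 hω.2
  set g : Ω → ℝ := fun ω => 1 + l * Z ω + l ^ 2 * (Real.exp 1 - 2) * Z ω ^ 2 with hg_def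
  have hptw : ∀ᵐ ω ∂P, Real.exp (l * Z ω) ≤ g ω := by
    filter_upwards [hx] with ω hω
    have := bernstein_exp_le hω.1 hω.2
    have heq : 1 + l * Z ω + (Real.exp 1 - 2) * (l * Z ω) ^ 2 = g ω := by
      simp only [hg_def]; ring
    linarith [this, heq.le]
  have hg_int : Integrable g P := by
    refine Integrable.add (Integrable.add (integrable_const 1) (hZint.const_mul l)) ?_
    exact hZ2int.const_mul _
  have hmono := condExp_mono (m := hist A R (n - 1)) hexp_int hg_int hptw
  have hgrep : g = (fun _ : Ω => (1:ℝ)) + l • Z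
      + (l ^ 2 * (Real.exp 1 - 2)) • fun ω => Z ω ^ 2 := by
    funext ω
    simp [hg_def, smul_eq_mul]
  have hgcond : P[g | hist A R (n - 1)] =ᵐ[P]
      fun ω => 1 + l ^ 2 * (Real.exp 1 - 2)
        * (P[fun ω' => Z ω' ^ 2 | hist A R (n - 1)]) ω := by
    rw [hgrep]
    refine (condExp_add ((integrable_const 1).add (hZint.smul l)) (hZ2int.smul _) _).trans ?_
    have h1 : P[(fun _ : Ω => (1:ℝ)) + l • Z | hist A R (n - 1)]
        =ᵐ[P] fun _ => 1 := by
      refine (condExp_add (integrable_const 1) (hZint.smul l) _).trans ?_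
      have hc : P[(fun _ : Ω => (1:ℝ)) | hist A R (n - 1)] = fun _ => 1 :=
        condExp_const hm _
      have h2 : P[l • Z | hist A R (n - 1)] =ᵐ[P] l • P[Z | hist A R (n - 1)] :=
        condExp_smul l Z _
      filter_upwards [h2, hZmean] with ω hω1 hω2
      simp only [Pi.add_apply, hc, Pi.smul_apply, smul_eq_mul, hω1, hω2,
        Pi.zero_apply, mul_zero, add_zero]
    have h2 : P[(l ^ 2 * (Real.exp 1 - 2)) • (fun ω => Z ω ^ 2) | hist A R (n - 1)]
        =ᵐ[P] (l ^ 2 * (Real.exp 1 - 2)) • P[fun ω => Z ω ^ 2 | hist A R (n - 1)] :=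
      condExp_smul _ _ _
    filter_upwards [h1, h2] with ω hω1 hω2
    simp only [Pi.add_apply, hω1, hω2, Pi.smul_apply, smul_eq_mul]
  filter_upwards [hmono, hgcond] with ω hω1 hω2
  refine le_trans hω1 ?_
  rw [hω2]
  have := Real.add_one_le_exp
    (l ^ 2 * (Real.exp 1 - 2) * (P[fun ω' => Z ω' ^ 2 | hist A R (n - 1)]) ω)
  linarith


/-- Generic exponential supermartingale bound over the history filtration. -/
lemma exp_supermartingale
    (hA : ∀ n, Measurable (A n)) (hR : ∀ n, Measurable (R n))
    (t : ℕ) (Z cv : ℕ → Ω → ℝ) (l c : ℝ) (hc0 : 0 ≤ c)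
    (hZmeas : ∀ n, 1 ≤ n → n ≤ t → Measurable[hist A R n] (Z n))
    (hcvmeas : ∀ n, 1 ≤ n → n ≤ t → StronglyMeasurable[hist A R (n - 1)] (cv n))
    (hcv0 : ∀ n, 1 ≤ n → n ≤ t → 0 ≤ᵐ[P] cv n)
    (hlZ : ∀ n, 1 ≤ n → n ≤ t → ∀ᵐ ω ∂P, l * Z n ω ≤ 1)
    (hBern : ∀ n, 1 ≤ n → n ≤ t →
      P[fun ω => Real.exp (l * Z n ω) | hist A R (n - 1)]
        ≤ᵐ[P] fun ω => Real.exp (c * cv n ω)) :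
    ∀ k, k ≤ t →
      Integrable (fun ω => Real.exp (∑ n ∈ Finset.Icc 1 k,
        (l * Z n ω - c * cv n ω))) P ∧
      ∫ ω, Real.exp (∑ n ∈ Finset.Icc 1 k, (l * Z n ω - c * cv n ω)) ∂P ≤ 1 := by
  intro k
  induction k with
  | zero =>
    intro _
    have h0 : (Finset.Icc 1 0 : Finset ℕ) = ∅ := by decide
    constructor
    · simpa [h0] using (integrable_const (1:ℝ) : Integrable (fun _ : Ω => (1:ℝ)) P)
    · simp [h0]
  | succ k ih =>
    intro hk1
    have hkt : k ≤ t := by omega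
    obtain ⟨hIk, hintk⟩ := ih hkt
    have hm : hist A R k ≤ ‹MeasurableSpace Ω› := hist_le A R hA hR k
    -- a.e. facts uniform in n ∈ Icc 1 (k+1)
    have hae : ∀ᵐ ω ∂P, ∀ n, n ∈ Finset.Icc 1 (k+1) →
        (l * Z n ω ≤ 1 ∧ 0 ≤ cv n ω) := by
      rw [MeasureTheory.ae_all_iff]
      intro n
      by_cases hn : n ∈ Finset.Icc 1 (k+1)
      · have h1 : 1 ≤ n := (Finset.mem_Icc.1 hn).1
        have h2 : n ≤ t := le_trans (Finset.mem_Icc.1 hn).2 hk1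
        filter_upwards [hlZ n h1 h2, hcv0 n h1 h2] with ω hω1 hω2
        exact fun _ => ⟨hω1, hω2⟩
      · filter_upwards with ω hmem
        exact absurd hmem hn
    -- measurability of the pieces
    have hZmeas' : ∀ n, 1 ≤ n → n ≤ k + 1 → Measurable (Z n) := fun n h1 h2 =>
      ((hZmeas n h1 (by omega)).mono (hist_le A R hA hR n) le_rfl)
    have hcvmeas' : ∀ n, 1 ≤ n → n ≤ k + 1 → Measurable (cv n) := fun n h1 h2 =>
      ((hcvmeas n h1 (by omega)).measurable.mono (hist_le A R hA hR (n - 1)) le_rfl)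
    have hsum_meas : ∀ j, j ≤ k + 1 → Measurable (fun ω =>
        ∑ n ∈ Finset.Icc 1 j, (l * Z n ω - c * cv n ω)) := by
      intro j hj
      refine Finset.measurable_sum _ fun n hn => ?_
      have h1 : 1 ≤ n := (Finset.mem_Icc.1 hn).1
      have h2 : n ≤ k + 1 := le_trans (Finset.mem_Icc.1 hn).2 hj
      exact ((hZmeas' n h1 h2).const_mul l).sub ((hcvmeas' n h1 h2).const_mul c)
    -- a.e. bound on the partial sums
    have hsum_bd : ∀ᵐ ω ∂P, ∀ j, j ≤ k + 1 →
        ∑ n ∈ Finset.Icc 1 j, (l * Z n ω - c * cv n ω) ≤ j := by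
      filter_upwards [hae] with ω hω
      intro j hj
      calc ∑ n ∈ Finset.Icc 1 j, (l * Z n ω - c * cv n ω)
          ≤ ∑ n ∈ Finset.Icc 1 j, (1:ℝ) := by
            refine Finset.sum_le_sum fun n hn => ?_
            have hn' : n ∈ Finset.Icc 1 (k+1) := by
              rw [Finset.mem_Icc] at *
              omega
            have := hω n hn'
            nlinarith [this.1, this.2, mul_nonneg hc0 this.2]
        _ = j := by
            rw [Finset.sum_const, Nat.card_Icc]
            simp
    -- integrability of exp of partial sums
    have hEint : ∀ j, j ≤ k + 1 → Integrable (fun ω =>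
        Real.exp (∑ n ∈ Finset.Icc 1 j, (l * Z n ω - c * cv n ω))) P := by
      intro j hj
      refine integrable_of_ae_bound P
        (Real.measurable_exp.comp (hsum_meas j hj)).aestronglyMeasurable
        (C := Real.exp j) ?_
      filter_upwards [hsum_bd] with ω hω
      rw [Real.norm_eq_abs, abs_of_pos (Real.exp_pos _)]
      exact Real.exp_le_exp.2 (hω j hj)
    refine ⟨hEint (k+1) le_rfl, ?_⟩
    -- split off the last term
    set F : Ω → ℝ := fun ω =>
      Real.exp (∑ n ∈ Finset.Icc 1 k, (l * Z n ω - c * cv n ω))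
        * Real.exp (-(c * cv (k+1) ω)) with hF_def
    set G : Ω → ℝ := fun ω => Real.exp (l * Z (k+1) ω) with hG_def
    have hEq : ∀ ω, Real.exp (∑ n ∈ Finset.Icc 1 (k+1), (l * Z n ω - c * cv n ω))
        = F ω * G ω := by
      intro ω
      have hsplit : ∑ n ∈ Finset.Icc 1 (k+1), (l * Z n ω - c * cv n ω)
          = (∑ n ∈ Finset.Icc 1 k, (l * Z n ω - c * cv n ω))
            + (l * Z (k+1) ω - c * cv (k+1) ω) :=
        Finset.sum_Icc_succ_top (by omega) _
      rw [hsplit, show (∑ n ∈ Finset.Icc 1 k, (l * Z n ω - c * cv n ω))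
          + (l * Z (k+1) ω - c * cv (k+1) ω)
          = ((∑ n ∈ Finset.Icc 1 k, (l * Z n ω - c * cv n ω)) + -(c * cv (k+1) ω))
            + l * Z (k+1) ω by ring, Real.exp_add, Real.exp_add]
    have hF_m : StronglyMeasurable[hist A R k] F := by
      refine Measurable.stronglyMeasurable ?_
      refine Measurable.mul ?_ ?_
      · refine Measurable.exp ?_
        refine Finset.measurable_sum _ fun n hn => ?_
        have h1 : 1 ≤ n := (Finset.mem_Icc.1 hn).1
        have h2 : n ≤ k := (Finset.mem_Icc.1 hn).2
        refine Measurable.sub ?_ ?_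
        · exact ((hZmeas n h1 (by omega)).mono (hist_mono A R h2) le_rfl).const_mul l
        · exact (((hcvmeas n h1 (by omega)).measurable.mono
            (hist_mono A R (by omega)) le_rfl)).const_mul c
      · exact Measurable.exp (((hcvmeas (k+1) (by omega) (by omega)).measurable).const_mul c).neg
    have hF_pos : ∀ ω, 0 < F ω := fun ω =>
      mul_pos (Real.exp_pos _) (Real.exp_pos _)
    have hF_bd : ∀ᵐ ω ∂P, F ω ≤ Real.exp k := by
      filter_upwards [hsum_bd, hae] with ω hω1 hω2
      have h1 : Real.exp (∑ n ∈ Finset.Icc 1 k, (l * Z n ω - c * cv n ω))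
          ≤ Real.exp k := Real.exp_le_exp.2 (hω1 k (by omega))
      have h2 : Real.exp (-(c * cv (k+1) ω)) ≤ 1 := by
        rw [Real.exp_le_one_iff]
        have := (hω2 (k+1) (by rw [Finset.mem_Icc]; omega)).2
        have := mul_nonneg hc0 this
        linarith
      calc F ω ≤ Real.exp (∑ n ∈ Finset.Icc 1 k, (l * Z n ω - c * cv n ω)) * 1 :=
            mul_le_mul_of_nonneg_left h2 (Real.exp_pos _).le
        _ ≤ Real.exp k := by rw [mul_one]; exact h1
    have hG_bd : ∀ᵐ ω ∂P, G ω ≤ Real.exp 1 := by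
      filter_upwards [hae] with ω hω
      exact Real.exp_le_exp.2 (hω (k+1) (by rw [Finset.mem_Icc]; omega)).1
    have hG_meas : Measurable G :=
      Real.measurable_exp.comp ((hZmeas' (k+1) (by omega) le_rfl).const_mul l)
    have hG_int : Integrable G P := by
      refine integrable_of_ae_bound P hG_meas.aestronglyMeasurable (C := Real.exp 1) ?_
      filter_upwards [hG_bd] with ω hω
      rw [Real.norm_eq_abs, abs_of_pos (Real.exp_pos _)]
      exact hω
    have hFG_int : Integrable (fun ω => F ω * G ω) P := by
      refine integrable_of_ae_bound P
        (((hF_m.measurable.mono hm le_rfl)).mul hG_meas).aestronglyMeasurable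
        (C := Real.exp k * Real.exp 1) ?_
      filter_upwards [hF_bd, hG_bd] with ω hω1 hω2
      rw [Real.norm_eq_abs, abs_of_pos (mul_pos (hF_pos ω) (Real.exp_pos _))]
      exact mul_le_mul hω1 hω2 (Real.exp_pos _).le (Real.exp_pos _).le
    have hpull : P[fun ω => F ω * G ω | hist A R k] =ᵐ[P] F * P[G | hist A R k] :=
      condExp_mul_of_stronglyMeasurable_left hF_m hFG_int hG_int
    have hBern' := hBern (k+1) (by omega) (by omega)
    have h1 : ∫ ω, Real.exp (∑ n ∈ Finset.Icc 1 (k+1), (l * Z n ω - c * cv n ω)) ∂P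
        = ∫ ω, F ω * G ω ∂P :=
      integral_congr_ae (Filter.Eventually.of_forall fun ω => hEq ω)
    have h2 : ∫ ω, F ω * G ω ∂P = ∫ ω, (P[fun ω' => F ω' * G ω' | hist A R k]) ω ∂P :=
      (integral_condExp hm).symm
    have h3 : ∫ ω, (P[fun ω' => F ω' * G ω' | hist A R k]) ω ∂P
        = ∫ ω, (F * P[G | hist A R k]) ω ∂P :=
      integral_congr_ae hpull
    have h4 : ∫ ω, (F * P[G | hist A R k]) ω ∂P
        ≤ ∫ ω, Real.exp (∑ n ∈ Finset.Icc 1 k, (l * Z n ω - c * cv n ω)) ∂P := by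
      refine integral_mono_ae (integrable_condExp.congr hpull) hIk ?_
      filter_upwards [hBern'] with ω hω
      simp only [Pi.mul_apply]
      calc F ω * (P[G | hist A R k]) ω ≤ F ω * Real.exp (c * cv (k+1) ω) :=
            mul_le_mul_of_nonneg_left hω (hF_pos ω).le
        _ = Real.exp (∑ n ∈ Finset.Icc 1 k, (l * Z n ω - c * cv n ω)) := by
            rw [hF_def]
            rw [mul_assoc, ← Real.exp_add]
            simp
    rw [h1, h2, h3]
    exact le_trans h4 hintk


lemma core_final
    (t : ℕ) (ht : 1 ≤ t)
    (hA : ∀ n, Measurable (A n)) (hR : ∀ n, Measurable (R n))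
    (hR01 : ∀ n ω, R n ω ∈ Set.Icc (0 : ℝ) 1)
    (hpolMeas : ∀ n a, Measurable[hist A R (n - 1)] (fun ω => pol n ω a))
    (hpolCond : ∀ n, 1 ≤ n → n ≤ t → ∀ a : 𝒜,
      (P[(fun ω => if A n ω = a then (1 : ℝ) else 0) | hist A R (n - 1)])
        =ᵐ[P] fun ω => pol n ω a)
    (hrbar : ∀ a, rbar a ∈ Set.Icc (0 : ℝ) 1)
    (hrew : ∀ n, 1 ≤ n → n ≤ t →
      (P[R n | hist A R (n - 1) ⊔ MeasurableSpace.comap (A n) inferInstance])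
        =ᵐ[P] fun ω => rbar (A n ω))
    {ε : ℝ} (hε0 : 0 < ε) (hε1 : ε ≤ 1)
    (hεpol : ∀ n, 1 ≤ n → n ≤ t → ∀ a : 𝒜, ∀ᵐ ω ∂P, ε ≤ pol n ω a)
    {l : ℝ} (hl0 : 0 ≤ l) (hlε : l ≤ ε) (a : 𝒜) :
    Integrable (fun ω => Real.exp (l * t * (rIS A R pol t a ω - rbar a)
        - l ^ 2 * (Real.exp 1 - 2) * Vis P A R pol rbar t a ω)) P ∧
    ∫ ω, Real.exp (l * t * (rIS A R pol t a ω - rbar a)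
        - l ^ 2 * (Real.exp 1 - 2) * Vis P A R pol rbar t a ω) ∂P ≤ 1 := by
  have he2 : (0:ℝ) ≤ Real.exp 1 - 2 := by
    have := Real.add_one_le_exp 1
    linarith
  have hc0 : 0 ≤ l ^ 2 * (Real.exp 1 - 2) := mul_nonneg (sq_nonneg l) he2
  have hεA : ∀ n, 1 ≤ n → n ≤ t → ∀ᵐ ω ∂P, ε ≤ pol n ω (A n ω) := by
    intro n h1 h2
    have hall : ∀ᵐ ω ∂P, ∀ b, ε ≤ pol n ω b :=
      (MeasureTheory.ae_all_iff).2 fun b => hεpol n h1 h2 b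
    filter_upwards [hall] with ω hω
    exact hω (A n ω)
  have hZbd : ∀ n, 1 ≤ n → n ≤ t → ∀ᵐ ω ∂P,
      -1 ≤ Zis A R pol rbar a n ω ∧ Zis A R pol rbar a n ω ≤ ε⁻¹ := by
    intro n h1 h2
    filter_upwards [hεA n h1 h2] with ω hω
    exact Zis_bounds A R pol rbar hε0 hε1 hω (hR01 n ω).1 (hR01 n ω).2
      (hrbar a).1 (hrbar a).2
  have hkey := exp_supermartingale P A R hA hR t
    (fun n => Zis A R pol rbar a n)
    (fun n ω => (P[fun ω' => (Zis A R pol rbar a n ω') ^ 2 | hist A R (n - 1)]) ω)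
    l (l ^ 2 * (Real.exp 1 - 2)) hc0
    (fun n h1 h2 => measurable_Zis A R pol hpolMeas rbar a h1 le_rfl)
    (fun n h1 h2 => stronglyMeasurable_condExp)
    (fun n h1 h2 => condExp_nonneg (Filter.Eventually.of_forall fun ω => sq_nonneg _))
    (fun n h1 h2 => by
      filter_upwards [hZbd n h1 h2] with ω hω
      have ha : l * Zis A R pol rbar a n ω ≤ l * ε⁻¹ :=
        mul_le_mul_of_nonneg_left hω.2 hl0
      have hb : l * ε⁻¹ ≤ ε * ε⁻¹ := by
        apply mul_le_mul_of_nonneg_right hlε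
        positivity
      rw [mul_inv_cancel₀ hε0.ne'] at hb
      linarith)
    (fun n h1 h2 => by
      refine condExp_exp_le P A R pol rbar hA hR hε0 hε1 ?_ (hZbd n h1 h2) ?_ hl0 hlε
      · exact (measurable_Zis A R pol hpolMeas rbar a h1 le_rfl).mono
          (hist_le A R hA hR n) le_rfl
      · exact condExp_Zis_zero P A R pol rbar hA hR hR01 hpolMeas hε0
          (hpolCond n h1 h2 a) (hrew n h1 h2) (hεpol n h1 h2 a))
    t le_rfl
  have ht' : (t:ℝ) ≠ 0 := by
    have : 0 < t := ht
    exact_mod_cast this.ne'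
  have hrepr : ∀ ω, l * t * (rIS A R pol t a ω - rbar a)
      - l ^ 2 * (Real.exp 1 - 2) * Vis P A R pol rbar t a ω
      = ∑ n ∈ Finset.Icc 1 t, (l * Zis A R pol rbar a n ω
        - l ^ 2 * (Real.exp 1 - 2)
          * (P[fun ω' => (Zis A R pol rbar a n ω') ^ 2 | hist A R (n - 1)]) ω) := by
    intro ω
    rw [Finset.sum_sub_distrib, ← Finset.mul_sum, ← Finset.mul_sum]
    have hZsum : ∑ n ∈ Finset.Icc 1 t, Zis A R pol rbar a n ω
        = (∑ n ∈ Finset.Icc 1 t,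
            (if A n ω = a then (1:ℝ) else 0) / pol n ω (A n ω) * R n ω)
          - t * rbar a := by
      unfold Zis
      rw [Finset.sum_sub_distrib, Finset.sum_const, Nat.card_Icc]
      simp [nsmul_eq_mul]
    rw [hZsum]
    unfold rIS Vis
    field_simp
  constructor
  · exact hkey.1.congr (Filter.Eventually.of_forall fun ω =>
      (congrArg Real.exp (hrepr ω)).symm)
  · calc ∫ ω, Real.exp (l * t * (rIS A R pol t a ω - rbar a)
        - l ^ 2 * (Real.exp 1 - 2) * Vis P A R pol rbar t a ω) ∂P
        = ∫ ω, Real.exp (∑ n ∈ Finset.Icc 1 t, (l * Zis A R pol rbar a n ω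
          - l ^ 2 * (Real.exp 1 - 2)
            * (P[fun ω' => (Zis A R pol rbar a n ω') ^ 2 | hist A R (n - 1)]) ω)) ∂P :=
          integral_congr_ae (Filter.Eventually.of_forall fun ω => congrArg Real.exp (hrepr ω))
      _ ≤ 1 := hkey.2

end Core

/-- **Exponential supremum inequality (Donsker–Varadhan plus Bernstein step)**:
for every `l ∈ [0, ε]`,
`E[exp(sup_π {E_{A∼π}[l t (r̂^IS(A,H^t) − r̄(A)) − l²(e−2) V_t^IS(A)] − KL(π‖μ)})] ≤ 1`. -/
theorem exp_sup_inequality_bernstein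
    {Ω 𝒜 : Type*} [MeasurableSpace Ω] [Fintype 𝒜] [DecidableEq 𝒜]
    [MeasurableSpace 𝒜] [MeasurableSingletonClass 𝒜]
    (P : Measure Ω) [IsProbabilityMeasure P]
    -- the horizon
    (t : ℕ) (ht : 1 ≤ t)
    -- the action and reward processes
    (A : ℕ → Ω → 𝒜) (R : ℕ → Ω → ℝ)
    (hA : ∀ n, Measurable (A n)) (hR : ∀ n, Measurable (R n))
    (hR01 : ∀ n ω, R n ω ∈ Set.Icc (0 : ℝ) 1)
    -- the logging policies: `ℱ_{n-1}`-measurable pmfs on `𝒜`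
    (pol : ℕ → Ω → 𝒜 → ℝ)
    (hpolPMF : ∀ n ω, IsPMF (pol n ω))
    (hpolMeas : ∀ n a, Measurable[hist A R (n - 1)] (fun ω => pol n ω a))
    -- the conditional distribution of `A_n` given `ℱ_{n-1}` is `π_n`
    (hpolCond : ∀ n, 1 ≤ n → n ≤ t → ∀ a : 𝒜,
      (P[(fun ω => if A n ω = a then (1 : ℝ) else 0) | hist A R (n - 1)])
        =ᵐ[P] fun ω => pol n ω a)
    -- the mean-reward function: `E[R_n | ℱ_{n-1}, A_n] = r̄(A_n)`
    (rbar : 𝒜 → ℝ) (hrbar : ∀ a, rbar a ∈ Set.Icc (0 : ℝ) 1)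
    (hrew : ∀ n, 1 ≤ n → n ≤ t →
      (P[R n | hist A R (n - 1) ⊔ MeasurableSpace.comap (A n) inferInstance])
        =ᵐ[P] fun ω => rbar (A n ω))
    -- a uniform lower bound on the logging policies
    (ε : ℝ) (hε0 : 0 < ε) (hε1 : ε ≤ 1)
    (hεpol : ∀ n, 1 ≤ n → n ≤ t → ∀ a : 𝒜, ∀ᵐ ω ∂P, ε ≤ pol n ω a)
    -- the prior policy
    (μ : 𝒜 → ℝ) (hμ : IsPMF μ)
    (l : ℝ) (hl : l ∈ Set.Icc 0 ε) :
    ∫ ω, Real.exp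
        (⨆ p : {p : 𝒜 → ℝ // IsPMF p ∧ ∀ a, μ a = 0 → p a = 0},
          ((∑ a, p.1 a * (l * t * (rIS A R pol t a ω - rbar a)
              - l ^ 2 * (Real.exp 1 - 2) * Vis P A R pol rbar t a ω))
            - KL p.1 μ)) ∂P ≤ 1 := by
  have hl0 : 0 ≤ l := hl.1
  have hlε : l ≤ ε := hl.2
  have hcore : ∀ a : 𝒜,
      Integrable (fun ω => Real.exp (l * t * (rIS A R pol t a ω - rbar a)
          - l ^ 2 * (Real.exp 1 - 2) * Vis P A R pol rbar t a ω)) P ∧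
      ∫ ω, Real.exp (l * t * (rIS A R pol t a ω - rbar a)
          - l ^ 2 * (Real.exp 1 - 2) * Vis P A R pol rbar t a ω) ∂P ≤ 1 :=
    fun a => core_final P A R pol rbar t ht hA hR hR01 hpolMeas hpolCond hrbar hrew
      hε0 hε1 hεpol hl0 hlε a
  have hpoint : ∀ ω, Real.exp
      (⨆ p : {p : 𝒜 → ℝ // IsPMF p ∧ ∀ a, μ a = 0 → p a = 0},
        ((∑ a, p.1 a * (l * t * (rIS A R pol t a ω - rbar a)
            - l ^ 2 * (Real.exp 1 - 2) * Vis P A R pol rbar t a ω))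
          - KL p.1 μ))
      = ∑ a, μ a * Real.exp (l * t * (rIS A R pol t a ω - rbar a)
          - l ^ 2 * (Real.exp 1 - 2) * Vis P A R pol rbar t a ω) := by
    intro ω
    have h := dv_sup_eq μ hμ (fun a => l * t * (rIS A R pol t a ω - rbar a)
      - l ^ 2 * (Real.exp 1 - 2) * Vis P A R pol rbar t a ω)
    calc Real.exp (⨆ p : {p : 𝒜 → ℝ // IsPMF p ∧ ∀ a, μ a = 0 → p a = 0},
          ((∑ a, p.1 a * (l * t * (rIS A R pol t a ω - rbar a)
              - l ^ 2 * (Real.exp 1 - 2) * Vis P A R pol rbar t a ω))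
            - KL p.1 μ))
        = Real.exp (Real.log (∑ a, μ a * Real.exp (l * t * (rIS A R pol t a ω - rbar a)
            - l ^ 2 * (Real.exp 1 - 2) * Vis P A R pol rbar t a ω))) :=
          congrArg Real.exp h
      _ = ∑ a, μ a * Real.exp (l * t * (rIS A R pol t a ω - rbar a)
            - l ^ 2 * (Real.exp 1 - 2) * Vis P A R pol rbar t a ω) :=
          Real.exp_log (sum_exp_pos μ hμ _)
  calc ∫ ω, Real.exp
        (⨆ p : {p : 𝒜 → ℝ // IsPMF p ∧ ∀ a, μ a = 0 → p a = 0},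
          ((∑ a, p.1 a * (l * t * (rIS A R pol t a ω - rbar a)
              - l ^ 2 * (Real.exp 1 - 2) * Vis P A R pol rbar t a ω))
            - KL p.1 μ)) ∂P
      = ∫ ω, ∑ a, μ a * Real.exp (l * t * (rIS A R pol t a ω - rbar a)
          - l ^ 2 * (Real.exp 1 - 2) * Vis P A R pol rbar t a ω) ∂P :=
        integral_congr_ae (Filter.Eventually.of_forall hpoint)
    _ = ∑ a, ∫ ω, μ a * Real.exp (l * t * (rIS A R pol t a ω - rbar a)
          - l ^ 2 * (Real.exp 1 - 2) * Vis P A R pol rbar t a ω) ∂P :=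
        integral_finset_sum _ (fun a _ => ((hcore a).1.const_mul (μ a)))
    _ = ∑ a, μ a * ∫ ω, Real.exp (l * t * (rIS A R pol t a ω - rbar a)
          - l ^ 2 * (Real.exp 1 - 2) * Vis P A R pol rbar t a ω) ∂P :=
        Finset.sum_congr rfl fun a _ => integral_const_mul _ _
    _ ≤ ∑ a, μ a * 1 :=
        Finset.sum_le_sum fun a _ => mul_le_mul_of_nonneg_left (hcore a).2 (hμ.1 a)
    _ = 1 := by simp [hμ.2]


end OfflineBandits
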